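/- For every natural number n and every r ∈ R, one has x^n·r = Σ_{w ∈ {σ,δ}^n} (w_1 ∘ w_2 ∘ ⋯ ∘ w_n)(r) · x^{s(w)}, where the sum runs over all words w = (w_1,…,w_n) of length n in the two letters σ and δ, and s(w) denotes the number of indices i with w_i = σ. Equivalently, x^n·r = Σ_{k=0}^{n} Σ_{f ∈ C_{n−k,k}} f(r)·x^{n−k}, where C_{n−k,k} is the set of all maps R → R obtained as compositions, in some order, of n−k copies of σ and k copies of δ. -/

import Mathlib

/-- Let `A` be a ring containing `R` as a subring (via the injective
ring homomorphism `ι` sharing the identity), `x ∈ A`, `σ` a ring endomorphism of `R`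
and `δ` a `σ`-derivation of `R` with `x·r = σ(r)·x + δ(r)` for all `r ∈ R`.  Then for
every `n ∈ ℕ` and `r ∈ R`,
`x^n·r = Σ_{w ∈ {σ,δ}^n} (w_1 ∘ ⋯ ∘ w_n)(r) · x^{s(w)}`,
where the sum runs over all words `w` of length `n` in the letters `σ` (encoded `true`)
and `δ` (encoded `false`), and `s(w)` is the number of occurrences of `σ` in `w`. -/
theorem skew_poly_pow_mul_eq_sum_words
    {R A : Type*} [Ring R] [Ring A] (ι : R →+* A) (hι : Function.Injective ι)
    (x : A) (σ : R →+* R) (δ : R → R)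
    (hδadd : ∀ r s : R, δ (r + s) = δ r + δ s)
    (hδmul : ∀ r s : R, δ (r * s) = σ r * δ s + δ r * s)
    (hcomm : ∀ r : R, x * ι r = ι (σ r) * x + ι (δ r)) :
    ∀ (n : ℕ) (r : R),
      x ^ n * ι r =
        ∑ w : Fin n → Bool,
          ι (((List.ofFn fun i => if w i then (⇑σ : R → R) else δ).foldr (· ∘ ·) id) r) *
            x ^ ((List.ofFn w).count true) := by

  intro n
  induction n with
  | zero =>
    intro r
    simp
  | succ n ih =>
    intro r
    rw [pow_succ', mul_assoc, ih r, Finset.mul_sum]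
    rw [← ((Fin.consEquiv fun _ : Fin (n+1) => Bool).sum_comp
      (fun w : Fin (n+1) → Bool =>
        ι (((List.ofFn fun i => if w i then (⇑σ : R → R) else δ).foldr (· ∘ ·) id) r) *
          x ^ ((List.ofFn w).count true))),
      Fintype.sum_prod_type, Fintype.sum_bool]
    simp only [Fin.consEquiv, Equiv.coe_fn_mk, List.ofFn_succ, Fin.cons_zero, Fin.cons_succ,
      List.foldr_cons, List.count_cons, if_true, if_false]
    have key : ∀ g : Fin n → Bool,
        x * (ι (((List.ofFn fun i => if g i then (⇑σ : R → R) else δ).foldr (· ∘ ·) id) r) *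
          x ^ ((List.ofFn g).count true)) =
        ι (σ (((List.ofFn fun i => if g i then (⇑σ : R → R) else δ).foldr (· ∘ ·) id) r)) *
          x ^ ((List.ofFn g).count true + 1) +
        ι (δ (((List.ofFn fun i => if g i then (⇑σ : R → R) else δ).foldr (· ∘ ·) id) r)) *
          x ^ ((List.ofFn g).count true) := by
      intro g
      rw [← mul_assoc, hcomm, add_mul, mul_assoc, pow_succ']
    rw [Finset.sum_congr rfl fun g _ => key g, Finset.sum_add_distrib]
    simp
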